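/- For a fixed Markov policy: let $u_n : E \to U$ be measurable and define $T_n^{u_n} v(x) = c_n(x, u_n(x)) + \int_E v(y) P_n^{u_n(x)}(x, dy)$. If the Dobrushin coefficients $\Delta_n = \sup_{x,x'}\sup_{a,a'}\sup_B (P_n^a(x,B) - P_n^{a'}(x',B))$ satisfy $\Delta_n\cdots\Delta_{n+k}\to 0$ and $\sup_n R_n < \infty$, then given $\bar x \in E$ there exist unique bounded measurable functions $w_n^{u_n}$ with $w_n^{u_n}(\bar x) = 0$ and unique constants $\lambda_n(u_n)$ solving the Poisson equations $w_n^{u_n}(x) = c_n(x, u_n(x)) - \lambda_n(u_n) + \int_E w_{n+1}^{u_{n+1}}(y) P_n^{u_n(x)}(x, dy)$. -/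

import Mathlib

open MeasureTheory Filter

/-- Span seminorm of a real-valued function. -/
noncomputable def spanSeminorm {E : Type*} (v : E → ℝ) : ℝ :=
  ⨆ p : E × E, (v p.1 - v p.2)

lemma integrable_of_bdd' {E : Type*} [MeasurableSpace E] (μ : Measure E) [IsFiniteMeasure μ]
    (g : E → ℝ) (hg : Measurable g) (M : ℝ) (h : ∀ x, |g x| ≤ M) : Integrable g μ :=
  (integrable_const M).mono' hg.aestronglyMeasurable (Filter.Eventually.of_forall fun x => by
    simpa [Real.norm_eq_abs] using h x)

lemma abs_integral_le_of_bdd' {E : Type*} [MeasurableSpace E] (μ : Measure E)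
    [IsProbabilityMeasure μ] (g : E → ℝ) (M : ℝ) (h : ∀ x, |g x| ≤ M) :
    |∫ x, g x ∂μ| ≤ M := by
  have := norm_integral_le_of_norm_le_const (μ := μ) (f := g) (C := M)
    (Filter.Eventually.of_forall (fun x => by simpa [Real.norm_eq_abs] using h x))
  simpa [Real.norm_eq_abs, measure_univ] using this

lemma dobrushin' {E : Type*} [MeasurableSpace E] [Nonempty E]
    (μ ν : Measure E) [IsProbabilityMeasure μ] [IsProbabilityMeasure ν]
    (g : E → ℝ) (hg : Measurable g) (M : ℝ) (hgb : ∀ x, |g x| ≤ M)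
    (D S : ℝ) (hS0 : 0 ≤ S)
    (hD : ∀ B : Set E, MeasurableSet B → (μ B).toReal - (ν B).toReal ≤ D)
    (hgs : ∀ x y, g x - g y ≤ S) :
    (∫ x, g x ∂μ) - ∫ x, g x ∂ν ≤ D * S := by
  have hbdd : BddBelow (Set.range g) := ⟨-M, by rintro _ ⟨x, rfl⟩; linarith [abs_le.1 (hgb x)]⟩
  set b : ℝ := ⨅ x, g x with hb
  set g' : E → ℝ := fun x => g x - b with hg'
  have hg'm : Measurable g' := hg.sub measurable_const
  have hg'0 : ∀ x, 0 ≤ g' x := fun x => sub_nonneg.2 (ciInf_le hbdd x)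
  have hg'S : ∀ x, g' x ≤ S := fun x => by
    have : g x - S ≤ b := le_ciInf fun y => by linarith [hgs x y]
    simp only [hg']; linarith
  have hg'b : ∀ x, |g' x| ≤ S := fun x => abs_le.2 ⟨by linarith [hg'0 x], hg'S x⟩
  have hint : ∀ (m : Measure E) [IsFiniteMeasure m], Integrable g' m := fun m _ =>
    integrable_of_bdd' m g' hg'm S hg'b
  have key : (∫ x, g' x ∂μ) - ∫ x, g' x ∂ν ≤ D * S := by
    obtain ⟨A, hA, hA1, hA2⟩ := hahn_decomposition (μ := μ) (ν := ν)
    have hres : ν.restrict A ≤ μ.restrict A := by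
      refine Measure.le_iff.2 fun s hs => ?_
      rw [Measure.restrict_apply hs, Measure.restrict_apply hs]
      exact hA1 _ (hs.inter hA) Set.inter_subset_right
    have hres' : μ.restrict Aᶜ ≤ ν.restrict Aᶜ := by
      refine Measure.le_iff.2 fun s hs => ?_
      rw [Measure.restrict_apply hs, Measure.restrict_apply hs]
      exact hA2 _ (hs.inter hA.compl) Set.inter_subset_right
    set ρ : Measure E := μ.restrict A - ν.restrict A with hρ
    have hsplit : μ.restrict A = ρ + ν.restrict A :=
      (Measure.sub_add_cancel_of_le hres).symm
    haveI : IsFiniteMeasure ρ := isFiniteMeasure_of_le _ Measure.sub_le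
    have hμA : ∫ x, g' x ∂(μ.restrict A) = (∫ x, g' x ∂ρ) + ∫ x, g' x ∂(ν.restrict A) := by
      rw [hsplit]; exact integral_add_measure (hint _) (hint _)
    have h1 : ∫ x, g' x ∂ρ ≤ D * S := by
      have hρu : (ρ Set.univ).toReal ≤ D := by
        rw [hρ, Measure.sub_apply MeasurableSet.univ hres]
        rw [ENNReal.toReal_sub_of_le (Measure.le_iff'.1 hres Set.univ) (measure_ne_top _ _)]
        simp only [Measure.restrict_apply_univ]
        exact hD A hA
      calc ∫ x, g' x ∂ρ ≤ ∫ _x, S ∂ρ :=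
            integral_mono (hint ρ) (integrable_const S) fun x => hg'S x
        _ = (ρ Set.univ).toReal * S := by rw [integral_const]; rw [smul_eq_mul]; rfl
        _ ≤ D * S := mul_le_mul_of_nonneg_right hρu hS0
    have h2 : ∫ x, g' x ∂(μ.restrict Aᶜ) ≤ ∫ x, g' x ∂(ν.restrict Aᶜ) :=
      integral_mono_measure hres' (Filter.Eventually.of_forall hg'0) (hint _)
    have hμs : (∫ x, g' x ∂(μ.restrict A)) + ∫ x, g' x ∂(μ.restrict Aᶜ) = ∫ x, g' x ∂μ :=
      integral_add_compl hA (hint μ)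
    have hνs : (∫ x, g' x ∂(ν.restrict A)) + ∫ x, g' x ∂(ν.restrict Aᶜ) = ∫ x, g' x ∂ν :=
      integral_add_compl hA (hint ν)
    linarith
  have hμg : ∫ x, g' x ∂μ = (∫ x, g x ∂μ) - b := by
    rw [hg', integral_sub (integrable_of_bdd' μ g hg M hgb) (integrable_const b)]; simp
  have hνg : ∫ x, g' x ∂ν = (∫ x, g x ∂ν) - b := by
    rw [hg', integral_sub (integrable_of_bdd' ν g hg M hgb) (integrable_const b)]; simp
  linarith

/-- Finite-horizon pinned value iterates. -/
noncomputable def Wseq {E U : Type*} [MeasurableSpace E] (P : ℕ → U → E → Measure E)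
    (u : ℕ → E → U) (c : ℕ → E → U → ℝ) (xbar : E) : ℕ → ℕ → E → ℝ
  | 0 => fun _ _ => 0
  | (k+1) => fun n x => c n x (u n x) - c n xbar (u n xbar)
      + (∫ y, Wseq P u c xbar k (n+1) y ∂(P n (u n x) x))
      - ∫ y, Wseq P u c xbar k (n+1) y ∂(P n (u n xbar) xbar)

theorem stmt_15 {E U : Type*} [MeasurableSpace E] [Nonempty E]
    (P : ℕ → U → E → Measure E) (hP : ∀ n a x, IsProbabilityMeasure (P n a x))
    (u : ℕ → E → U)
    (hPm : ∀ n (g : E → ℝ), Measurable g → (∃ M, ∀ x, |g x| ≤ M) →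
      Measurable fun x => ∫ y, g y ∂(P n (u n x) x))
    (c : ℕ → E → U → ℝ)
    (hcm : ∀ n, Measurable fun x => c n x (u n x))
    (hcb : ∀ n, ∃ M, ∀ x a, |c n x a| ≤ M)
    (Δ cs : ℕ → ℝ) (hΔ0 : ∀ n, 0 ≤ Δ n) (hcs0 : ∀ n, 0 ≤ cs n)
    (hΔ : ∀ n x x' a a' (B : Set E), MeasurableSet B →
      (P n a x B).toReal - (P n a' x' B).toReal ≤ Δ n)
    (hcs : ∀ n x x' a a', c n x a - c n x' a' ≤ cs n)
    (hprod : ∀ n, Tendsto (fun k => ∏ i ∈ Finset.range (k + 1), Δ (n + i)) atTop (nhds 0))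
    (hsum : ∀ n, Summable fun i => (∏ j ∈ Finset.range (i + 1), Δ (n + j)) * cs (n + i + 1))
    (hsupR : ∃ B, ∀ n,
      cs n + ∑' i, (∏ j ∈ Finset.range (i + 1), Δ (n + j)) * cs (n + i + 1) ≤ B)
    (xbar : E) :
    ∃ (w : ℕ → E → ℝ) (l : ℕ → ℝ),
      (∀ n, Measurable (w n)) ∧ (∃ C, ∀ n x, |w n x| ≤ C) ∧
      (∀ n, w n xbar = 0) ∧
      (∀ n x, w n x = c n x (u n x) - l n + ∫ y, w (n + 1) y ∂(P n (u n x) x)) ∧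
      ∀ (w' : ℕ → E → ℝ) (l' : ℕ → ℝ),
        (∀ n, Measurable (w' n)) → (∃ C, ∀ n x, |w' n x| ≤ C) →
        (∀ n, w' n xbar = 0) →
        (∀ n x, w' n x = c n x (u n x) - l' n + ∫ y, w' (n + 1) y ∂(P n (u n x) x)) →
        w' = w ∧ l' = l := by
  classical
  obtain ⟨B, hB⟩ := hsupR
  set W : ℕ → ℕ → E → ℝ := Wseq P u c xbar with hWdef
  have hW0 : ∀ n (x : E), W 0 n x = 0 := fun n x => rfl
  have hWsucc : ∀ k n x, W (k+1) n x = c n x (u n x) - c n xbar (u n xbar)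
      + (∫ y, W k (n+1) y ∂(P n (u n x) x))
      - ∫ y, W k (n+1) y ∂(P n (u n xbar) xbar) := fun k n x => rfl
  -- measurability and (crude) boundedness
  have hWmb : ∀ k n, Measurable (W k n) ∧ ∃ M, ∀ x, |W k n x| ≤ M := by
    intro k
    induction k with
    | zero =>
      intro n
      exact ⟨measurable_const, 0, fun x => by simp [hW0]⟩
    | succ k ih =>
      intro n
      obtain ⟨hm, M, hM⟩ := ih (n+1)
      obtain ⟨Mc, hMc⟩ := hcb n
      have hIb : ∀ z : E, |∫ y, W k (n+1) y ∂(P n (u n z) z)| ≤ M := by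
        intro z
        haveI := hP n (u n z) z
        exact abs_integral_le_of_bdd' _ _ M hM
      constructor
      · have heq : W (k+1) n = fun x => c n x (u n x) - c n xbar (u n xbar)
            + (∫ y, W k (n+1) y ∂(P n (u n x) x))
            - ∫ y, W k (n+1) y ∂(P n (u n xbar) xbar) := funext (hWsucc k n)
        rw [heq]
        exact (((hcm n).sub measurable_const).add (hPm n _ hm ⟨M, hM⟩)).sub measurable_const
      · refine ⟨Mc + Mc + M + M, fun x => ?_⟩
        rw [hWsucc]
        have h1 := abs_le.1 (hMc x (u n x))
        have h2 := abs_le.1 (hMc xbar (u n xbar))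
        have h3 := abs_le.1 (hIb x)
        have h4 := abs_le.1 (hIb xbar)
        exact abs_le.2 ⟨by linarith, by linarith⟩
  have hWxbar : ∀ k n, W k n xbar = 0 := by
    intro k
    induction k with
    | zero => intro n; exact hW0 n xbar
    | succ k ih => intro n; rw [hWsucc]; ring
  -- span contraction on increments
  have hDspan : ∀ k n (x y : E),
      (W (k+1) n x - W k n x) - (W (k+1) n y - W k n y)
        ≤ (∏ j ∈ Finset.range k, Δ (n+j)) * cs (n+k) := by
    intro k
    induction k with
    | zero =>
      intro n x y
      simp only [hWsucc, hW0, integral_zero, Finset.range_zero, Finset.prod_empty, one_mul,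
        Nat.add_zero]
      have h := hcs n x y (u n x) (u n y)
      ring_nf
      ring_nf at h
      linarith
    | succ k ih =>
      intro n x y
      have key : ∀ z : E, W (k+1+1) n z - W (k+1) n z
          = (∫ y', (W (k+1) (n+1) y' - W k (n+1) y') ∂(P n (u n z) z))
            - ∫ y', (W (k+1) (n+1) y' - W k (n+1) y') ∂(P n (u n xbar) xbar) := by
        intro z
        haveI := hP n (u n z) z
        haveI := hP n (u n xbar) xbar
        obtain ⟨hm1, M1, hM1⟩ := hWmb (k+1) (n+1)
        obtain ⟨hm0, M0, hM0⟩ := hWmb k (n+1)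
        rw [integral_sub (integrable_of_bdd' _ _ hm1 M1 hM1) (integrable_of_bdd' _ _ hm0 M0 hM0),
          integral_sub (integrable_of_bdd' _ _ hm1 M1 hM1) (integrable_of_bdd' _ _ hm0 M0 hM0),
          hWsucc (k+1) n z, hWsucc k n z]
        ring
      rw [key x, key y]
      obtain ⟨hm1, M1, hM1⟩ := hWmb (k+1) (n+1)
      obtain ⟨hm0, M0, hM0⟩ := hWmb k (n+1)
      haveI := hP n (u n x) x
      haveI := hP n (u n y) y
      have hS0 : 0 ≤ (∏ j ∈ Finset.range k, Δ (n+1+j)) * cs (n+1+k) :=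
        mul_nonneg (Finset.prod_nonneg fun j _ => hΔ0 _) (hcs0 _)
      have hdob := dobrushin' (P n (u n x) x) (P n (u n y) y)
        (fun y' => W (k+1) (n+1) y' - W k (n+1) y') (hm1.sub hm0) (M1 + M0)
        (fun y' => by
          have hh1 := abs_le.1 (hM1 y'); have hh0 := abs_le.1 (hM0 y')
          show |W (k+1) (n+1) y' - W k (n+1) y'| ≤ M1 + M0
          exact abs_le.2 ⟨by linarith [hh1.1, hh1.2, hh0.1, hh0.2],
            by linarith [hh1.1, hh1.2, hh0.1, hh0.2]⟩)
        (Δ n) ((∏ j ∈ Finset.range k, Δ (n+1+j)) * cs (n+1+k)) hS0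
        (fun Bs hBs => hΔ n x y _ _ Bs hBs)
        (fun a b => ih (n+1) a b)
      have hrw : (∏ j ∈ Finset.range (k+1), Δ (n+j)) * cs (n+(k+1))
          = Δ n * ((∏ j ∈ Finset.range k, Δ (n+1+j)) * cs (n+1+k)) := by
        rw [Finset.prod_range_succ']
        have h1 : (∏ j ∈ Finset.range k, Δ (n+(j+1))) = ∏ j ∈ Finset.range k, Δ (n+1+j) :=
          Finset.prod_congr rfl fun j _ => by congr 1; omega
        have h2 : n + (k+1) = n+1+k := by omega
        rw [h1, h2]; simp only [Nat.add_zero]; ring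
      rw [hrw]
      linarith
  have hDabs : ∀ k n (x : E), |W (k+1) n x - W k n x|
      ≤ (∏ j ∈ Finset.range k, Δ (n+j)) * cs (n+k) := by
    intro k n x
    have h1 := hDspan k n x xbar
    have h2 := hDspan k n xbar x
    rw [hWxbar, hWxbar] at h1 h2
    exact abs_le.2 ⟨by linarith, by linarith⟩
  -- summability of the increment bounds
  set bnd : ℕ → ℕ → ℝ := fun n i => (∏ j ∈ Finset.range i, Δ (n+j)) * cs (n+i) with hbnddef
  have hbnd0 : ∀ n i, 0 ≤ bnd n i := fun n i =>
    mul_nonneg (Finset.prod_nonneg fun j _ => hΔ0 _) (hcs0 _)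
  have hbnd_sum : ∀ n, Summable (bnd n) := by
    intro n
    have h1 : Summable (fun i => bnd n (i+1)) := hsum n
    exact (summable_nat_add_iff 1).1 h1
  have htsum_le : ∀ n, ∑' i, bnd n i ≤ B := by
    intro n
    rw [Summable.tsum_eq_zero_add (hbnd_sum n)]
    have h0 : bnd n 0 = cs n := by simp [hbnddef]
    rw [h0]
    have heq : ∑' i, bnd n (i+1)
        = ∑' i, (∏ j ∈ Finset.range (i + 1), Δ (n + j)) * cs (n + i + 1) := rfl
    rw [heq]
    exact hB n
  have hWB : ∀ k n (x : E), |W k n x| ≤ B := by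
    intro k n x
    have hsum_repr : W k n x = ∑ i ∈ Finset.range k, (W (i+1) n x - W i n x) := by
      rw [Finset.sum_range_sub (f := fun i => W i n x), hW0, sub_zero]
    rw [hsum_repr]
    calc |∑ i ∈ Finset.range k, (W (i+1) n x - W i n x)|
        ≤ ∑ i ∈ Finset.range k, |W (i+1) n x - W i n x| := Finset.abs_sum_le_sum_abs _ _
      _ ≤ ∑ i ∈ Finset.range k, bnd n i := Finset.sum_le_sum fun i _ => hDabs i n x
      _ ≤ ∑' i, bnd n i := (hbnd_sum n).sum_le_tsum _ (fun i _ => hbnd0 n i)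
      _ ≤ B := htsum_le n
  have hDsummable : ∀ n (x : E), Summable (fun i => W (i+1) n x - W i n x) := by
    intro n x
    refine Summable.of_abs ?_
    exact Summable.of_nonneg_of_le (fun i => abs_nonneg _) (fun i => hDabs i n x) (hbnd_sum n)
  set w : ℕ → E → ℝ := fun n x => ∑' i, (W (i+1) n x - W i n x) with hwdef
  have htend : ∀ n (x : E), Tendsto (fun k => W k n x) atTop (nhds (w n x)) := by
    intro n x
    have h := (hDsummable n x).hasSum.tendsto_sum_nat
    have heq : ∀ k, ∑ i ∈ Finset.range k, (W (i+1) n x - W i n x) = W k n x := fun k => by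
      rw [Finset.sum_range_sub (f := fun i => W i n x), hW0, sub_zero]
    simpa only [heq] using h
  have hwmeas : ∀ n, Measurable (w n) :=
    fun n => measurable_of_tendsto_metrizable (fun k => (hWmb k n).1)
      (tendsto_pi_nhds.2 fun x => htend n x)
  have hwB : ∀ n (x : E), |w n x| ≤ B := fun n x =>
    le_of_tendsto (htend n x).abs (Filter.Eventually.of_forall fun k => hWB k n x)
  have hwxbar : ∀ n, w n xbar = 0 := fun n =>
    tendsto_nhds_unique (htend n xbar)
      (by simp only [hWxbar]; exact tendsto_const_nhds)
  set l : ℕ → ℝ := fun n => c n xbar (u n xbar) + ∫ y, w (n+1) y ∂(P n (u n xbar) xbar)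
    with hldef
  have hpoisson : ∀ n x, w n x = c n x (u n x) - l n + ∫ y, w (n+1) y ∂(P n (u n x) x) := by
    intro n x
    have hI : ∀ z : E, Tendsto (fun k => ∫ y, W k (n+1) y ∂(P n (u n z) z)) atTop
        (nhds (∫ y, w (n+1) y ∂(P n (u n z) z))) := by
      intro z
      haveI := hP n (u n z) z
      exact tendsto_integral_of_dominated_convergence (fun _ => B)
        (fun k => ((hWmb k (n+1)).1).aestronglyMeasurable) (integrable_const B)
        (fun k => Filter.Eventually.of_forall fun y => by
          simpa [Real.norm_eq_abs] using hWB k (n+1) y)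
        (Filter.Eventually.of_forall fun y => htend (n+1) y)
    have h1 : Tendsto (fun k => W (k+1) n x) atTop (nhds (w n x)) :=
      (htend n x).comp (tendsto_add_atTop_nat 1)
    have h2 : Tendsto (fun k => W (k+1) n x) atTop
        (nhds (c n x (u n x) - c n xbar (u n xbar)
          + (∫ y, w (n+1) y ∂(P n (u n x) x)) - ∫ y, w (n+1) y ∂(P n (u n xbar) xbar))) := by
      simp only [hWsucc]
      exact (Tendsto.add tendsto_const_nhds (hI x)).sub (hI xbar)
    have heq := tendsto_nhds_unique h1 h2
    rw [heq, hldef]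
    ring
  refine ⟨w, l, hwmeas, ⟨B, hwB⟩, hwxbar, hpoisson, ?_⟩
  -- uniqueness
  intro w' l' hw'm hw'b hw'xbar hw'p
  obtain ⟨C, hC⟩ := hw'b
  have hCB0 : 0 ≤ C + B := by
    have a1 := abs_nonneg (w' 0 xbar)
    have a2 := hC 0 xbar
    have a3 := abs_nonneg (w 0 xbar)
    have a4 := hwB 0 xbar
    linarith
  have hdb : ∀ n (x : E), |w' n x - w n x| ≤ C + B := fun n x => by
    have h1 := abs_le.1 (hC n x); have h2 := abs_le.1 (hwB n x)
    exact abs_le.2 ⟨by linarith, by linarith⟩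
  have hdm : ∀ n, Measurable fun x => w' n x - w n x := fun n => (hw'm n).sub (hwmeas n)
  have hdrec : ∀ n (x : E), w' n x - w n x
      = (l n - l' n) + ∫ y, (w' (n+1) y - w (n+1) y) ∂(P n (u n x) x) := by
    intro n x
    haveI := hP n (u n x) x
    rw [integral_sub (integrable_of_bdd' _ _ (hw'm (n+1)) C (hC (n+1)))
      (integrable_of_bdd' _ _ (hwmeas (n+1)) B (hwB (n+1)))]
    have e1 := hw'p n x
    have e2 := hpoisson n x
    linarith
  have hspan : ∀ k n (x y : E), (w' n x - w n x) - (w' n y - w n y)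
      ≤ (∏ j ∈ Finset.range k, Δ (n+j)) * (2*(C+B)) := by
    intro k
    induction k with
    | zero =>
      intro n x y
      simp only [Finset.range_zero, Finset.prod_empty, one_mul]
      have h1 := abs_le.1 (hdb n x); have h2 := abs_le.1 (hdb n y)
      linarith
    | succ k ih =>
      intro n x y
      rw [hdrec n x, hdrec n y]
      haveI := hP n (u n x) x
      haveI := hP n (u n y) y
      have hS0 : 0 ≤ (∏ j ∈ Finset.range k, Δ (n+1+j)) * (2*(C+B)) :=
        mul_nonneg (Finset.prod_nonneg fun j _ => hΔ0 _) (by linarith)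
      have hdob := dobrushin' (P n (u n x) x) (P n (u n y) y)
        (fun y' => w' (n+1) y' - w (n+1) y') (hdm (n+1)) (C+B) (hdb (n+1))
        (Δ n) ((∏ j ∈ Finset.range k, Δ (n+1+j)) * (2*(C+B))) hS0
        (fun Bs hBs => hΔ n x y _ _ Bs hBs)
        (fun a b => ih (n+1) a b)
      have hrw : (∏ j ∈ Finset.range (k+1), Δ (n+j)) * (2*(C+B))
          = Δ n * ((∏ j ∈ Finset.range k, Δ (n+1+j)) * (2*(C+B))) := by
        rw [Finset.prod_range_succ']
        have h1 : (∏ j ∈ Finset.range k, Δ (n+(j+1))) = ∏ j ∈ Finset.range k, Δ (n+1+j) :=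
          Finset.prod_congr rfl fun j _ => by congr 1; omega
        rw [h1]; simp only [Nat.add_zero]; ring
      rw [hrw]
      linarith
  have hdzero : ∀ n (x : E), w' n x = w n x := by
    intro n x
    have hT : Tendsto (fun k => (∏ j ∈ Finset.range (k+1), Δ (n+j)) * (2*(C+B))) atTop
        (nhds 0) := by
      simpa using (hprod n).mul_const (2*(C+B))
    have h1 : w' n x - w n x ≤ 0 := by
      refine ge_of_tendsto hT (Filter.Eventually.of_forall fun k => ?_)
      have h := hspan (k+1) n x xbar
      rw [hw'xbar n, hwxbar n] at h
      linarith
    have h2 : -(w' n x - w n x) ≤ 0 := by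
      refine ge_of_tendsto hT (Filter.Eventually.of_forall fun k => ?_)
      have h := hspan (k+1) n xbar x
      rw [hw'xbar n, hwxbar n] at h
      linarith
    linarith
  have hw'w : w' = w := funext fun n => funext fun x => hdzero n x
  refine ⟨hw'w, funext fun n => ?_⟩
  have e1 := hw'p n xbar
  rw [hw'w, hwxbar n] at e1
  have e2 := hpoisson n xbar
  rw [hwxbar n] at e2
  linarith
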